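/- arXiv:1404.3807 — 5 statements merged into one kernel-verified Lean document; each statement's English description precedes it below -/
import Mathlib

section
/- Assume that every admissible set of size k (for some fixed k ≥ 2) has infinitely many translates n + H containing at least two primes. Then for d = ∏_{p ≤ k} p and every N ≥ 1, the set {dN, 2dN, ..., (k-1)dN} contains at least one Polignac number. -/
def Admissible (H : Finset ℤ) : Prop :=
  ∀ p : ℕ, p.Prime → ∃ n : ZMod p, ∀ h ∈ H, (h : ZMod p) ≠ n

def IsPolignac (m : ℕ) : Prop :=
  {p : ℕ | p.Prime ∧ (p + m).Prime}.Infinite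

lemma polignac_aux (a : ℤ) (m : ℕ)
    (hT : {n : ℤ | Prime (n + a) ∧ Prime (n + (a + m))}.Infinite) : IsPolignac m := by
  by_contra hfin
  rw [IsPolignac, Set.not_infinite] at hfin
  apply hT
  have hsub : {n : ℤ | Prime (n + a) ∧ Prime (n + (a + m))} ⊆
      ((fun p : ℕ => (p : ℤ) - a) '' {p : ℕ | p.Prime ∧ (p + m).Prime}) ∪
      ((fun p : ℕ => -(p : ℤ) - (a + m)) '' {p : ℕ | p.Prime ∧ (p + m).Prime}) ∪
      Set.Icc (-(a + m)) (-a) := by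
    rintro n ⟨h1, h2⟩
    rcases lt_or_ge 0 (n + a) with hpos | hle
    · left; left
      refine ⟨(n + a).natAbs, ⟨Int.prime_iff_natAbs_prime.mp h1, ?_⟩, ?_⟩
      · have hc : ((n + a).natAbs : ℤ) = n + a := Int.natAbs_of_nonneg hpos.le
        have hc2 : (((n + a).natAbs + m : ℕ) : ℤ) = n + (a + m) := by push_cast [hc]; ring
        rw [← hc2] at h2
        exact Nat.prime_iff_prime_int.mpr h2
      · have hc : ((n + a).natAbs : ℤ) = n + a := Int.natAbs_of_nonneg hpos.le
        simp only []
        linarith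
    · rcases lt_or_ge (n + (a + m)) 0 with hneg | hge
      · left; right
        refine ⟨(n + (a + m)).natAbs, ⟨Int.prime_iff_natAbs_prime.mp h2, ?_⟩, ?_⟩
        · have hc : ((n + (a + m)).natAbs : ℤ) = -(n + (a + m)) :=
            Int.ofNat_natAbs_of_nonpos hneg.le
          have hc2 : (((n + (a + m)).natAbs + m : ℕ) : ℤ) = -(n + a) := by push_cast [hc]; ring
          have h1' : Prime ((((n + (a + m)).natAbs + m : ℕ) : ℤ)) := by
            rw [hc2]
            exact h1.neg
          exact Nat.prime_iff_prime_int.mpr h1'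
        · have hc : ((n + (a + m)).natAbs : ℤ) = -(n + (a + m)) :=
            Int.ofNat_natAbs_of_nonpos hneg.le
          simp only []
          linarith
      · right
        constructor <;> linarith
  exact (((hfin.image _).union (hfin.image _)).union (Set.finite_Icc _ _)).subset hsub

theorem stmt_1 (k : ℕ) (hk : 2 ≤ k)
    (hyp : ∀ H : Finset ℤ, H.card = k → Admissible H →
      {n : ℤ | ∃ h₁ ∈ H, ∃ h₂ ∈ H, h₁ ≠ h₂ ∧ Prime (n + h₁) ∧ Prime (n + h₂)}.Infinite)
    (N : ℕ) (hN : 1 ≤ N)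
    (d : ℕ) (hd : d = ∏ p ∈ (Finset.range (k + 1)).filter Nat.Prime, p) :
    ∃ i ∈ Finset.Icc 1 (k - 1), IsPolignac (i * d * N) := by
  classical
  have hd1 : 0 < d := by
    rw [hd]
    exact Finset.prod_pos fun p hp => (Finset.mem_filter.mp hp).2.pos
  have hD1 : 0 < d * N := Nat.mul_pos hd1 hN
  set f : ℕ → ℤ := fun i => (i : ℤ) * (d * N) with hf
  have hfinj : Function.Injective f := by
    intro i j h
    simp only [hf] at h
    have hDne : ((d : ℤ) * N) ≠ 0 := by
      have h0 : ((d * N : ℕ) : ℤ) ≠ 0 := by exact_mod_cast hD1.ne'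
      push_cast at h0
      exact h0
    have : (i : ℤ) = (j : ℤ) := mul_right_cancel₀ hDne h
    exact_mod_cast this
  set H : Finset ℤ := (Finset.range k).image f with hH
  have hcard : H.card = k := by
    rw [hH, Finset.card_image_of_injective _ hfinj, Finset.card_range]
  have hadm : Admissible H := by
    intro p hp
    haveI := Fact.mk hp
    by_cases hpk : p ≤ k
    · refine ⟨1, fun h hh => ?_⟩
      obtain ⟨i, _, rfl⟩ := Finset.mem_image.mp hh
      have hpd : p ∣ d := by
        rw [hd]
        exact Finset.dvd_prod_of_mem _
          (Finset.mem_filter.mpr ⟨Finset.mem_range.mpr (by omega), hp⟩)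
      have hz : ((f i : ℤ) : ZMod p) = 0 := by
        simp only [hf]
        push_cast
        rw [(ZMod.natCast_eq_zero_iff d p).mpr hpd]
        ring
      rw [hz]
      exact zero_ne_one
    · push_neg at hpk
      by_contra hno
      push_neg at hno
      have huniv : H.image (fun h : ℤ => (h : ZMod p)) = Finset.univ :=
        Finset.eq_univ_iff_forall.mpr fun n => by
          obtain ⟨h, hh, he⟩ := hno n
          exact Finset.mem_image.mpr ⟨h, hh, he⟩
      have hc1 : (H.image (fun h : ℤ => (h : ZMod p))).card ≤ k := by
        calc (H.image (fun h : ℤ => (h : ZMod p))).card ≤ H.card := Finset.card_image_le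
          _ = k := hcard
      rw [huniv, Finset.card_univ, ZMod.card] at hc1
      omega
  have hS := hyp H hcard hadm
  by_contra hcon
  push_neg at hcon
  have key' : ∀ i j : ℕ, i < j → j < k →
      {n : ℤ | Prime (n + f i) ∧ Prime (n + f j)}.Finite := by
    intro i j hij hjk
    by_contra hinf
    have heq : f j = f i + (((j - i) * d * N : ℕ) : ℤ) := by
      simp only [hf]
      push_cast [Nat.cast_sub hij.le]
      ring
    have hpol : IsPolignac ((j - i) * d * N) := by
      apply polignac_aux (f i)
      rw [← heq]
      exact hinf
    exact hcon (j - i) (Finset.mem_Icc.mpr ⟨by omega, by omega⟩) hpol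
  have key : ∀ q ∈ ((Finset.range k ×ˢ Finset.range k).filter
      (fun q : ℕ × ℕ => q.1 ≠ q.2) : Finset (ℕ × ℕ)),
      {n : ℤ | Prime (n + f q.1) ∧ Prime (n + f q.2)}.Finite := by
    intro q hq
    obtain ⟨hmem, hne⟩ := Finset.mem_filter.mp hq
    obtain ⟨h1, h2⟩ := Finset.mem_product.mp hmem
    rw [Finset.mem_range] at h1 h2
    rcases lt_or_gt_of_ne hne with hlt | hgt
    · exact key' q.1 q.2 hlt h2
    · exact (key' q.2 q.1 hgt h1).subset fun n hn => ⟨hn.2, hn.1⟩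
  have hsub : {n : ℤ | ∃ h₁ ∈ H, ∃ h₂ ∈ H, h₁ ≠ h₂ ∧ Prime (n + h₁) ∧ Prime (n + h₂)} ⊆
      ⋃ q ∈ (((Finset.range k ×ˢ Finset.range k).filter
        (fun q : ℕ × ℕ => q.1 ≠ q.2) : Finset (ℕ × ℕ)) : Set (ℕ × ℕ)),
        {n : ℤ | Prime (n + f q.1) ∧ Prime (n + f q.2)} := by
    rintro n ⟨h₁, hh₁, h₂, hh₂, hne, hp1, hp2⟩
    obtain ⟨i, hi, rfl⟩ := Finset.mem_image.mp hh₁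
    obtain ⟨j, hj, rfl⟩ := Finset.mem_image.mp hh₂
    have hij : i ≠ j := fun h => hne (by rw [h])
    have hmemq : (i, j) ∈ (((Finset.range k ×ˢ Finset.range k).filter
        (fun q : ℕ × ℕ => q.1 ≠ q.2) : Finset (ℕ × ℕ)) : Set (ℕ × ℕ)) :=
      Finset.mem_coe.mpr (Finset.mem_filter.mpr
        ⟨Finset.mem_product.mpr ⟨hi, hj⟩, hij⟩)
    exact Set.mem_biUnion hmemq ⟨hp1, hp2⟩
  exact hS ((Set.Finite.biUnion (Finset.finite_toSet _) key).subset hsub)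
end

section
/- Assume that every admissible set of size k has infinitely many translates containing at least two primes. Then for every positive integer q, the arithmetic progression q, 2q, 3q, ... contains infinitely many Polignac numbers. -/
lemma natPrime_of_prime_pos {z : ℤ} (h0 : 0 < z) (hp : Prime z) : Nat.Prime z.toNat := by
  have hz : z.toNat = z.natAbs := by omega
  rw [hz]
  rwa [Int.prime_iff_natAbs_prime] at hp

lemma polignac_of_infinite {a b : ℤ} (hab : a < b)
    (h : {n : ℤ | Prime (n + a) ∧ Prime (n + b)}.Infinite) :
    IsPolignac (b - a).toNat := by
  set S := {n : ℤ | Prime (n + a) ∧ Prime (n + b)}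
  have hsub : S ⊆ ({n : ℤ | Prime (n + a) ∧ Prime (n + b) ∧ 0 < n + a} ∪
      {n : ℤ | Prime (n + a) ∧ Prime (n + b) ∧ n + b < 0}) ∪ Set.Icc (-b) (-a) := by
    intro n hn
    rcases lt_trichotomy 0 (n + a) with h1 | h1 | h1
    · exact Or.inl (Or.inl ⟨hn.1, hn.2, h1⟩)
    · exact absurd h1.symm hn.1.ne_zero
    · rcases lt_trichotomy (n + b) 0 with h2 | h2 | h2
      · exact Or.inl (Or.inr ⟨hn.1, hn.2, h2⟩)
      · exact absurd h2 hn.2.ne_zero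
      · exact Or.inr ⟨by linarith, by linarith⟩
  have := ((h.mono hsub).diff (Set.finite_Icc (-b) (-a)))
  rw [Set.union_diff_right] at this
  have hinf := this.mono Set.diff_subset
  rcases Set.infinite_union.mp hinf with hpos | hneg
  · -- both positive
    have : ((fun n : ℤ => (n + a).toNat) '' {n : ℤ | Prime (n + a) ∧ Prime (n + b) ∧ 0 < n + a})
        ⊆ {p : ℕ | p.Prime ∧ (p + (b - a).toNat).Prime} := by
      rintro _ ⟨n, ⟨hp1, hp2, hn⟩, rfl⟩
      refine ⟨natPrime_of_prime_pos hn hp1, ?_⟩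
      show Nat.Prime ((n + a).toNat + (b - a).toNat)
      rw [Nat.prime_iff_prime_int]
      push_cast [Int.toNat_of_nonneg hn.le, Int.toNat_of_nonneg (by linarith : (0:ℤ) ≤ b - a)]
      have he : n + a + (b - a) = n + b := by ring
      rw [he]; exact hp2
    refine Set.Infinite.mono this (Set.Infinite.image ?_ hpos)
    intro x hx y hy hxy
    have := congrArg (fun t : ℕ => (t : ℤ)) hxy
    simp only [Int.toNat_of_nonneg hx.2.2.le, Int.toNat_of_nonneg hy.2.2.le] at this
    linarith
  · -- both negative
    have : ((fun n : ℤ => (-(n + b)).toNat) '' {n : ℤ | Prime (n + a) ∧ Prime (n + b) ∧ n + b < 0})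
        ⊆ {p : ℕ | p.Prime ∧ (p + (b - a).toNat).Prime} := by
      rintro _ ⟨n, ⟨hp1, hp2, hn⟩, rfl⟩
      refine ⟨natPrime_of_prime_pos (by linarith) hp2.neg, ?_⟩
      show Nat.Prime ((-(n + b)).toNat + (b - a).toNat)
      rw [Nat.prime_iff_prime_int]
      push_cast [Int.toNat_of_nonneg (by linarith : (0:ℤ) ≤ -(n + b)),
        Int.toNat_of_nonneg (by linarith : (0:ℤ) ≤ b - a)]
      have he : -(n + b) + (b - a) = -(n + a) := by ring
      rw [he]; exact hp1.neg
    refine Set.Infinite.mono this (Set.Infinite.image ?_ hneg)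
    intro x hx y hy hxy
    have := congrArg (fun t : ℕ => (t : ℤ)) hxy
    simp only [Int.toNat_of_nonneg (neg_nonneg.mpr hx.2.2.le),
      Int.toNat_of_nonneg (neg_nonneg.mpr hy.2.2.le)] at this
    linarith

lemma exists_pair {H : Finset ℤ}
    (h : {n : ℤ | ∃ h₁ ∈ H, ∃ h₂ ∈ H, h₁ ≠ h₂ ∧ Prime (n + h₁) ∧ Prime (n + h₂)}.Infinite) :
    ∃ a ∈ H, ∃ b ∈ H, a < b ∧ {n : ℤ | Prime (n + a) ∧ Prime (n + b)}.Infinite := by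
  by_contra hc
  push_neg at hc
  have hfin : ∀ a ∈ H, ∀ b ∈ H, a ≠ b →
      {n : ℤ | Prime (n + a) ∧ Prime (n + b)}.Finite := by
    intro a ha b hb hab
    rcases hab.lt_or_gt with hlt | hlt
    · exact (hc a ha b hb hlt)
    · exact (hc b hb a ha hlt).subset (fun n hn => ⟨hn.2, hn.1⟩)
  apply h
  have : {n : ℤ | ∃ h₁ ∈ H, ∃ h₂ ∈ H, h₁ ≠ h₂ ∧ Prime (n + h₁) ∧ Prime (n + h₂)}
      ⊆ ⋃ a ∈ H, ⋃ b ∈ H, {n : ℤ | a ≠ b ∧ Prime (n + a) ∧ Prime (n + b)} := by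
    rintro n ⟨h₁, hh₁, h₂, hh₂, hne, hp1, hp2⟩
    exact Set.mem_biUnion hh₁ (Set.mem_biUnion hh₂ ⟨hne, hp1, hp2⟩)
  refine Set.Finite.subset ?_ this
  refine Set.Finite.biUnion H.finite_toSet (fun a ha => Set.Finite.biUnion H.finite_toSet
    (fun b hb => ?_))
  by_cases hab : a = b
  · subst hab
    exact Set.finite_empty.subset (fun n hn => (hn.1 rfl).elim)
  · exact (hfin a ha b hb hab).subset (fun n hn => hn.2)

theorem stmt_2 (k : ℕ) (hk : 2 ≤ k)
    (hyp : ∀ H : Finset ℤ, H.card = k → Admissible H →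
      {n : ℤ | ∃ h₁ ∈ H, ∃ h₂ ∈ H, h₁ ≠ h₂ ∧ Prime (n + h₁) ∧ Prime (n + h₂)}.Infinite)
    (q : ℕ) (hq : 0 < q) :
    {m : ℕ | IsPolignac m ∧ ∃ j : ℕ, 0 < j ∧ m = j * q}.Infinite := by
  apply Set.infinite_of_forall_exists_gt
  intro B
  set M : ℕ := q * k.factorial * (B + 1) with hM
  have hMpos : 0 < M := by positivity
  have hMB : B < M := by
    calc B < B + 1 := Nat.lt_succ_self B
    _ ≤ M := Nat.le_mul_of_pos_left _ (by positivity)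
  set H : Finset ℤ := (Finset.range k).image (fun i : ℕ => (i : ℤ) * M) with hH
  have hcard : H.card = k := by
    rw [hH, Finset.card_image_of_injective, Finset.card_range]
    intro i j hij
    have : (i : ℤ) = j := by
      have hM0 : (M : ℤ) ≠ 0 := Int.natCast_ne_zero.mpr hMpos.ne'
      exact mul_right_cancel₀ hM0 hij
    exact_mod_cast this
  have hadm : Admissible H := by
    intro p hp
    by_cases hpk : p ≤ k
    · refine ⟨1, ?_⟩
      intro h hh
      rw [hH, Finset.mem_image] at hh
      obtain ⟨i, _, rfl⟩ := hh
      have hdvd : (p : ℤ) ∣ (i : ℤ) * M := by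
        refine Dvd.dvd.mul_left ?_ _
        exact_mod_cast (Nat.dvd_factorial hp.pos hpk).mul_left q |>.mul_right (B + 1)
      have h0 : (((i : ℤ) * M : ℤ) : ZMod p) = 0 :=
        (ZMod.intCast_zmod_eq_zero_iff_dvd _ _).mpr hdvd
      rw [h0]
      haveI := Fact.mk hp
      exact zero_ne_one
    · push_neg at hpk
      haveI := Fact.mk hp
      have hcard2 : (H.image (fun h : ℤ => (h : ZMod p))).card < Fintype.card (ZMod p) := by
        calc (H.image _).card ≤ H.card := Finset.card_image_le
        _ = k := hcard
        _ < p := hpk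
        _ = Fintype.card (ZMod p) := (ZMod.card p).symm
      have hne : H.image (fun h : ℤ => (h : ZMod p)) ≠ Finset.univ :=
        (Finset.card_lt_iff_ne_univ _).mp hcard2
      have hex : ∃ n : ZMod p, n ∉ H.image (fun h : ℤ => (h : ZMod p)) := by
        by_contra hall
        push_neg at hall
        exact absurd (Finset.eq_univ_iff_forall.mpr hall) hne
      obtain ⟨n, hn⟩ := hex
      exact ⟨n, fun h hh hc => hn (Finset.mem_image.mpr ⟨h, hh, hc⟩)⟩
  have hinf := hyp H hcard hadm
  obtain ⟨a, ha, b, hb, hab, habinf⟩ := exists_pair hinf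
  have hpol := polignac_of_infinite hab habinf
  refine ⟨(b - a).toNat, ⟨hpol, ?_⟩, ?_⟩
  · -- (b-a).toNat is positive multiple of q
    rw [hH, Finset.mem_image] at ha hb
    obtain ⟨i, _, rfl⟩ := ha
    obtain ⟨j, _, rfl⟩ := hb
    have hq' : (q : ℤ) ∣ ((j : ℤ) * M - (i : ℤ) * M) := by
      have : (q : ℤ) ∣ (M : ℤ) := by exact_mod_cast Dvd.dvd.mul_right (dvd_mul_right q _) (B+1)
      exact dvd_sub (this.mul_left _) (this.mul_left _)
    have hpos : 0 < (j : ℤ) * M - (i : ℤ) * M := by linarith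
    obtain ⟨c, hc⟩ := hq'
    have hc0 : 0 < c := by
      by_contra hc0
      push_neg at hc0
      have : (q : ℤ) * c ≤ 0 := mul_nonpos_of_nonneg_of_nonpos (by positivity) hc0
      omega
    refine ⟨c.toNat, by omega, ?_⟩
    have : ((j : ℤ) * M - (i : ℤ) * M) = (c.toNat : ℤ) * q := by
      rw [Int.toNat_of_nonneg hc0.le]; linarith [hc]
    omega
  · -- (b-a).toNat > B
    rw [hH, Finset.mem_image] at ha hb
    obtain ⟨i, _, rfl⟩ := ha
    obtain ⟨j, _, rfl⟩ := hb
    have hij : (i : ℤ) < j := by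
      have : (0:ℤ) < M := by exact_mod_cast hMpos
      nlinarith [hab]
    have : (M : ℤ) ≤ (j : ℤ) * M - (i : ℤ) * M := by
      have : (1:ℤ) ≤ (j : ℤ) - i := by linarith
      nlinarith [Int.natCast_pos.mpr hMpos]
    omega
end

section
/- Assume that every admissible set of size k has infinitely many translates containing at least two primes. Then every arithmetic progression a, a+q, a+2q, ... with q dividing a and a, q positive integers contains infinitely many Polignac numbers. -/
lemma lemA (D : ℕ) (hT : {x : ℤ | Prime x ∧ Prime (x + (D : ℤ))}.Infinite) :
    IsPolignac D := by
  by_contra hfin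
  rw [IsPolignac, Set.not_infinite] at hfin
  have hband : (Set.Ioo (-(D : ℤ)) 0).Finite := Set.finite_Ioo _ _
  have hT' : ({x : ℤ | Prime x ∧ Prime (x + (D : ℤ))} \ Set.Ioo (-(D : ℤ)) 0).Infinite :=
    hT.diff hband
  have hsub : {x : ℤ | Prime x ∧ Prime (x + (D : ℤ))} \ Set.Ioo (-(D : ℤ)) 0 ⊆
      ⋃ p ∈ {p : ℕ | p.Prime ∧ (p + D).Prime}, ({(p : ℤ), -(p : ℤ) - D} : Set ℤ) := by
    rintro x ⟨⟨hx1, hx2⟩, hx3⟩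
    simp only [Set.mem_Ioo, not_and, not_lt] at hx3
    rcases lt_or_ge 0 x with hpos | hneg
    · refine Set.mem_biUnion (show x.toNat ∈ _ from ?_) ?_
      · constructor
        · rw [Nat.prime_iff_prime_int, Int.toNat_of_nonneg hpos.le]; exact hx1
        · rw [Nat.prime_iff_prime_int]
          push_cast
          rw [Int.toNat_of_nonneg hpos.le]; exact hx2
      · left; rw [Int.toNat_of_nonneg hpos.le]
    · have hxneg : x < 0 := lt_of_le_of_ne hneg hx1.ne_zero
      have hxle : x ≤ -(D : ℤ) := by
        by_contra h
        exact absurd (hx3 (lt_of_not_ge h)) (not_le.mpr hxneg)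
      have hyneg : x + D < 0 := lt_of_le_of_ne (by linarith) hx2.ne_zero
      refine Set.mem_biUnion (show (-(x + D)).toNat ∈ _ from ?_) ?_
      · have h1 : ((-(x + D)).toNat : ℤ) = -(x + D) := Int.toNat_of_nonneg (by linarith)
        constructor
        · rw [Nat.prime_iff_prime_int, h1]; exact hx2.neg
        · rw [Nat.prime_iff_prime_int]
          push_cast
          rw [h1]
          have : -(x + ↑D) + ↑D = -x := by ring
          rw [this]; exact hx1.neg
      · right
        have h1 : ((-(x + D)).toNat : ℤ) = -(x + D) := Int.toNat_of_nonneg (by linarith)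
        simp only [Set.mem_singleton_iff]
        rw [h1]; ring
  exact hT' ((hfin.biUnion (fun p _ => (Set.finite_singleton _).insert _)).subset hsub)

lemma admis (k M : ℕ) (hfac : k.factorial ∣ M) :
    Admissible ((Finset.range k).image (fun j : ℕ => ((j : ℤ) * (M : ℤ)))) := by
  intro p hp
  haveI : Fact p.Prime := ⟨hp⟩
  by_cases hpM : p ∣ M
  · refine ⟨1, ?_⟩
    intro h hh
    simp only [Finset.mem_image, Finset.mem_range] at hh
    obtain ⟨j, hj, rfl⟩ := hh
    have hM0 : ((M : ℕ) : ZMod p) = 0 := (ZMod.natCast_eq_zero_iff M p).mpr hpM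
    push_cast
    rw [hM0]
    simp
  · have hkp : k < p := by
      by_contra hle
      exact hpM (dvd_trans (Nat.dvd_factorial hp.pos (le_of_not_gt hle)) hfac)
    set G : Finset (ZMod p) :=
      (Finset.range k).image (fun j : ℕ => ((j : ZMod p) * (M : ZMod p))) with hG
    have hcard : G.card < Fintype.card (ZMod p) := by
      calc G.card ≤ (Finset.range k).card := Finset.card_image_le
        _ = k := Finset.card_range k
        _ < p := hkp
        _ = Fintype.card (ZMod p) := (ZMod.card p).symm
    have hex : ∃ n : ZMod p, n ∉ G := by
      by_contra hall
      push_neg at hall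
      have : Fintype.card (ZMod p) ≤ G.card := by
        rw [← Finset.card_univ]
        exact Finset.card_le_card (fun x _ => hall x)
      omega
    obtain ⟨n, hn⟩ := hex
    refine ⟨n, ?_⟩
    intro h hh
    simp only [Finset.mem_image, Finset.mem_range] at hh
    obtain ⟨j, hj, rfl⟩ := hh
    intro heq
    apply hn
    simp only [hG, Finset.mem_image, Finset.mem_range]
    exact ⟨j, hj, by rw [← heq]; push_cast; ring⟩

lemma key (k : ℕ) (hk : 2 ≤ k)
    (hyp : ∀ H : Finset ℤ, H.card = k → Admissible H →
      {n : ℤ | ∃ h₁ ∈ H, ∃ h₂ ∈ H, h₁ ≠ h₂ ∧ Prime (n + h₁) ∧ Prime (n + h₂)}.Infinite)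
    (a q : ℕ) (ha : 0 < a) (hq : 0 < q) (hdvd : q ∣ a) (t : ℕ) :
    ∃ m : ℕ, t < m ∧ IsPolignac m ∧ ∃ i : ℕ, m = a + i * q := by
  set M : ℕ := a * k.factorial * (t + 1) with hMdef
  have hM : 0 < M := by positivity
  have hfac : k.factorial ∣ M := ⟨a * (t + 1), by ring⟩
  set H : Finset ℤ := (Finset.range k).image (fun j : ℕ => ((j : ℤ) * (M : ℤ))) with hH
  have hinj : Function.Injective (fun j : ℕ => ((j : ℤ) * (M : ℤ))) := by
    intro i j h
    simp only at h
    have : (i : ℤ) = j := by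
      have hM' : (M : ℤ) ≠ 0 := by exact_mod_cast hM.ne'
      exact mul_right_cancel₀ hM' h
    exact_mod_cast this
  have hcard : H.card = k := by
    rw [hH, Finset.card_image_of_injective _ hinj, Finset.card_range]
  have hS := hyp H hcard (admis k M hfac)
  set Fib : ℕ × ℕ → Set ℤ := fun jp =>
    {n : ℤ | jp.1 < jp.2 ∧ Prime (n + (jp.1 : ℤ) * M) ∧ Prime (n + (jp.2 : ℤ) * M)} with hFib
  have hcover : {n : ℤ | ∃ h₁ ∈ H, ∃ h₂ ∈ H, h₁ ≠ h₂ ∧ Prime (n + h₁) ∧ Prime (n + h₂)} ⊆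
      ⋃ jp ∈ ((Finset.range k ×ˢ Finset.range k : Finset (ℕ × ℕ)) : Set (ℕ × ℕ)), Fib jp := by
    rintro n ⟨h₁, hh₁, h₂, hh₂, hne, hp₁, hp₂⟩
    simp only [hH, Finset.mem_image, Finset.mem_range] at hh₁ hh₂
    obtain ⟨j₁, hj₁, rfl⟩ := hh₁
    obtain ⟨j₂, hj₂, rfl⟩ := hh₂
    have hjne : j₁ ≠ j₂ := fun h => hne (by rw [h])
    rcases lt_or_gt_of_ne hjne with hlt | hlt
    · exact Set.mem_biUnion (show ((j₁, j₂) : ℕ × ℕ) ∈ _ by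
        simp [Finset.mem_coe, Finset.mem_product, hj₁, hj₂]) ⟨hlt, hp₁, hp₂⟩
    · exact Set.mem_biUnion (show ((j₂, j₁) : ℕ × ℕ) ∈ _ by
        simp [Finset.mem_coe, Finset.mem_product, hj₁, hj₂]) ⟨hlt, hp₂, hp₁⟩
  have hex : ∃ jp ∈ ((Finset.range k ×ˢ Finset.range k : Finset (ℕ × ℕ)) : Set (ℕ × ℕ)),
      (Fib jp).Infinite := by
    by_contra hall
    push_neg at hall
    exact hS (((Set.Finite.biUnion (Finset.finite_toSet _) hall)).subset hcover)
  obtain ⟨⟨j₁, j₂⟩, hjp, hfib⟩ := hex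
  obtain ⟨n0, hn0⟩ := hfib.nonempty
  have hlt : j₁ < j₂ := hn0.1
  set D : ℕ := (j₂ - j₁) * M with hDdef
  have hDM : (D : ℤ) = ((j₂ : ℤ) - (j₁ : ℤ)) * M := by
    rw [hDdef]
    push_cast [hlt.le]
    ring
  have hT : {x : ℤ | Prime x ∧ Prime (x + (D : ℤ))}.Infinite := by
    have himg := hfib.image (add_left_injective ((j₁ : ℤ) * M)).injOn
    refine himg.mono ?_
    rintro x ⟨n, hn, rfl⟩
    refine ⟨hn.2.1, ?_⟩
    have heq : n + (j₁ : ℤ) * M + (D : ℤ) = n + (j₂ : ℤ) * M := by rw [hDM]; ring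
    rw [heq]
    exact hn.2.2
  have hpol := lemA D hT
  have haM : a ∣ M := ⟨k.factorial * (t + 1), by ring⟩
  have hMD : M ∣ D := dvd_mul_left M (j₂ - j₁)
  have haD : a ∣ D := haM.trans hMD
  have hqD : q ∣ D := hdvd.trans haD
  have h1 : t + 1 ≤ M := by
    have h2 : 1 ≤ a * k.factorial := Nat.mul_pos ha (Nat.factorial_pos k)
    calc t + 1 = 1 * (t + 1) := (one_mul _).symm
      _ ≤ a * k.factorial * (t + 1) := Nat.mul_le_mul_right _ h2
  have h3 : M ≤ D := Nat.le_of_dvd (Nat.mul_pos (by omega) hM) hMD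
  have h4 : a ≤ D := Nat.le_of_dvd (by omega) haD
  obtain ⟨c, hc⟩ := Nat.dvd_sub hqD hdvd
  exact ⟨D, by omega, hpol, c, by rw [mul_comm c q, ← hc]; omega⟩

theorem stmt_3 (k : ℕ) (hk : 2 ≤ k)
    (hyp : ∀ H : Finset ℤ, H.card = k → Admissible H →
      {n : ℤ | ∃ h₁ ∈ H, ∃ h₂ ∈ H, h₁ ≠ h₂ ∧ Prime (n + h₁) ∧ Prime (n + h₂)}.Infinite)
    (a q : ℕ) (ha : 0 < a) (hq : 0 < q) (hdvd : q ∣ a) :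
    {m : ℕ | IsPolignac m ∧ ∃ i : ℕ, m = a + i * q}.Infinite := by
  by_contra h
  rw [Set.not_infinite] at h
  obtain ⟨b, hb⟩ := h.bddAbove
  obtain ⟨m, hm, hpol, hi⟩ := key k hk hyp a q ha hq hdvd b
  exact absurd (hb ⟨hpol, hi⟩) (by omega)
end

section
/- If there exists a constant C > 0 such that every interval [m, m + C] contains at least one Polignac number, then the set of Polignac numbers contains arbitrarily long arithmetic progressions. -/
theorem stmt_5 (C : ℕ) (hC : 0 < C)
    (hyp : ∀ m : ℕ, 1 ≤ m → ∃ x ∈ Set.Icc m (m + C), IsPolignac x) :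
    ∀ L : ℕ, ∃ a d : ℕ, 0 < d ∧ ∀ i < L, IsPolignac (a + i * d) := by
  intro L
  -- coloring: for each m, an offset c ≤ C with m+1+c Polignac
  have key : ∀ m : ℕ, ∃ c : Fin (C + 1), IsPolignac (m + 1 + c.val) := by
    intro m
    obtain ⟨x, hx, hP⟩ := hyp (m + 1) (Nat.le_add_left 1 m)
    obtain ⟨h1, h2⟩ := hx
    refine ⟨⟨x - (m + 1), ?_⟩, ?_⟩
    · omega
    · simpa [Nat.add_sub_cancel' h1] using hP
  choose f hf using key
  obtain ⟨d, hd, b, c, hmono⟩ :=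
    Combinatorics.exists_mono_homothetic_copy (Finset.range L) f
  refine ⟨b + 1 + c.val, d, hd, fun i hi => ?_⟩
  have h := hmono i (Finset.mem_range.mpr hi)
  have := hf (d • i + b)
  rw [h] at this
  have : IsPolignac (d * i + b + 1 + c.val) := by simpa [smul_eq_mul] using this
  have heq : b + 1 + c.val + i * d = d * i + b + 1 + c.val := by ring
  rw [heq]
  exact this
end

section
/- Assume every admissible set of size k has infinitely many translates containing two primes. Then there exist infinitely many Polignac numbers. -/
lemma pair_extract (A B : ℤ) (hA : Prime A) (hB : Prime B) (hAB : A < B)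
    (hsign : 0 < A ∨ B < 0) :
    ∃ p : ℕ, p.Prime ∧ (p + (B - A).natAbs).Prime ∧ (A = (p : ℤ) ∨ B = -(p : ℤ)) := by
  rcases hsign with h | h
  · refine ⟨A.natAbs, Int.prime_iff_natAbs_prime.mp hA, ?_, Or.inl (Int.natAbs_of_nonneg h.le).symm⟩
    have hcast : ((A.natAbs + (B - A).natAbs : ℕ) : ℤ) = B := by
      push_cast [Int.natAbs_of_nonneg h.le, Int.natAbs_of_nonneg (by linarith : (0:ℤ) ≤ B - A)]
      ring
    have h2 : A.natAbs + (B - A).natAbs = B.natAbs := by omega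
    rw [h2]
    exact Int.prime_iff_natAbs_prime.mp hB
  · have hBle : (B.natAbs : ℤ) = -B := by omega
    refine ⟨B.natAbs, Int.prime_iff_natAbs_prime.mp hB, ?_, Or.inr (by rw [hBle]; ring)⟩
    have hcast : ((B.natAbs + (B - A).natAbs : ℕ) : ℤ) = -A := by
      rw [Nat.cast_add, hBle, Int.natAbs_of_nonneg (by linarith : (0:ℤ) ≤ B - A)]
      ring
    have h2 : B.natAbs + (B - A).natAbs = A.natAbs := by omega
    rw [h2]
    exact Int.prime_iff_natAbs_prime.mp hA

theorem stmt_11 (k : ℕ) (hk : 2 ≤ k)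
    (hyp : ∀ H : Finset ℤ, H.card = k → Admissible H →
      {n : ℤ | ∃ h₁ ∈ H, ∃ h₂ ∈ H, h₁ ≠ h₂ ∧ Prime (n + h₁) ∧ Prime (n + h₂)}.Infinite) :
    {m : ℕ | IsPolignac m}.Infinite := by
  apply Set.infinite_of_not_bddAbove
  rintro ⟨B0, hB0⟩
  set N : ℕ := B0 + 1 with hN
  set e : ℕ := k.factorial * N with he
  have he0 : 0 < e := Nat.mul_pos k.factorial_pos (by omega : 0 < N)
  have heB : B0 < e := by
    calc B0 < N := Nat.lt_succ_self B0
    _ ≤ e := Nat.le_mul_of_pos_left N k.factorial_pos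
  set H : Finset ℤ := (Finset.range k).image (fun i : ℕ => (i : ℤ) * (e : ℤ)) with hH
  have hinj : Function.Injective (fun i : ℕ => (i : ℤ) * (e : ℤ)) := by
    intro a b hab
    have he' : (e : ℤ) ≠ 0 := by exact_mod_cast he0.ne'
    have : (a : ℤ) = b := mul_right_cancel₀ he' hab
    exact_mod_cast this
  have hcard : H.card = k := by
    rw [hH, Finset.card_image_of_injective _ hinj, Finset.card_range]
  have hadm : Admissible H := by
    intro p hp
    haveI := Fact.mk hp
    by_cases hpk : p ≤ k
    · refine ⟨1, ?_⟩
      intro h hh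
      simp only [hH, Finset.mem_image, Finset.mem_range] at hh
      obtain ⟨i, hi, rfl⟩ := hh
      have hz : ((e : ℕ) : ZMod p) = 0 := by
        rw [ZMod.natCast_eq_zero_iff]
        exact dvd_trans (Nat.dvd_factorial hp.pos hpk) ⟨N, rfl⟩
      push_cast
      rw [hz, mul_zero]
      exact zero_ne_one
    · push_neg at hpk
      by_contra hcon
      push_neg at hcon
      have hsub : (Finset.univ : Finset (ZMod p)) ⊆ H.image (fun h : ℤ => (h : ZMod p)) := by
        intro n _
        obtain ⟨h, hh, heq⟩ := hcon n
        exact Finset.mem_image.mpr ⟨h, hh, heq⟩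
      have h1 := Finset.card_le_card hsub
      rw [Finset.card_univ, ZMod.card] at h1
      have h2 := Finset.card_image_le (s := H) (f := fun h : ℤ => (h : ZMod p))
      omega
  have hS := hyp H hcard hadm
  set C : ℤ := (k : ℤ) * (e : ℤ) with hC
  have hHmem : ∀ h ∈ H, 0 ≤ h ∧ h < C := by
    intro h hh
    simp only [hH, Finset.mem_image, Finset.mem_range] at hh
    obtain ⟨i, hi, rfl⟩ := hh
    have he' : (0 : ℤ) < (e : ℤ) := by exact_mod_cast he0
    constructor
    · positivity
    · exact mul_lt_mul_of_pos_right (by exact_mod_cast hi) he'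
  set S' : Set ℤ := {n : ℤ | ∃ h₁ ∈ H, ∃ h₂ ∈ H, h₁ ≠ h₂ ∧ Prime (n + h₁) ∧ Prime (n + h₂)}
      \ Set.Icc (-C) C with hS'def
  have hS' : S'.Infinite := hS.diff (Set.finite_Icc _ _)
  set D : Finset ℕ := (H ×ˢ H).image (fun q => (q.2 - q.1).natAbs) with hD
  set T : ℕ → Set ℤ := fun m => {n ∈ S' | ∃ h₁ ∈ H, ∃ h₂ ∈ H,
      h₁ ≠ h₂ ∧ Prime (n + h₁) ∧ Prime (n + h₂) ∧ (h₂ - h₁).natAbs = m} with hT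
  have hcover : S' ⊆ ⋃ m ∈ (D : Set ℕ), T m := by
    intro n hn
    obtain ⟨⟨h₁, h1H, h₂, h2H, hne, hp1, hp2⟩, hnC⟩ := hn
    have hmD : (h₂ - h₁).natAbs ∈ D := by
      rw [hD]
      exact Finset.mem_image.mpr ⟨(h₁, h₂), Finset.mem_product.mpr ⟨h1H, h2H⟩, rfl⟩
    simp only [Set.mem_iUnion]
    exact ⟨(h₂ - h₁).natAbs, hmD, ⟨⟨h₁, h1H, h₂, h2H, hne, hp1, hp2⟩, hnC⟩,
      h₁, h1H, h₂, h2H, hne, hp1, hp2, rfl⟩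
  obtain ⟨m, hmD, hTm⟩ : ∃ m ∈ (D : Set ℕ), (T m).Infinite := by
    by_contra hcon
    push_neg at hcon
    exact hS' ((Set.Finite.biUnion D.finite_toSet
      (fun m hm => hcon m hm)).subset hcover)
  -- m ≥ e
  have hme : e ≤ m := by
    obtain ⟨n0, hn0⟩ := hTm.nonempty
    obtain ⟨_, h₁, h1H, h₂, h2H, hne, _, _, hm⟩ := hn0
    simp only [hH, Finset.mem_image, Finset.mem_range] at h1H h2H
    obtain ⟨i, hi, rfl⟩ := h1H
    obtain ⟨j, hj, rfl⟩ := h2H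
    have hij : i ≠ j := fun hc => hne (by rw [hc])
    have hfac : ((j : ℤ) * e - (i : ℤ) * e).natAbs = ((j : ℤ) - i).natAbs * e := by
      rw [show (j : ℤ) * e - (i : ℤ) * e = ((j : ℤ) - i) * e by ring, Int.natAbs_mul]
      simp
    have hpos : 1 ≤ ((j : ℤ) - i).natAbs := by
      rcases Nat.eq_zero_or_pos ((j : ℤ) - i).natAbs with h0 | h0
      · exfalso
        have : (j : ℤ) - i = 0 := Int.natAbs_eq_zero.mp h0
        have : (i : ℤ) = j := by linarith
        exact hij (by exact_mod_cast this)
      · exact h0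
    calc e = 1 * e := (one_mul e).symm
    _ ≤ ((j : ℤ) - i).natAbs * e := Nat.mul_le_mul_right e hpos
    _ = m := by rw [← hfac, hm]
  -- IsPolignac m
  have hP : IsPolignac m := by
    rw [IsPolignac]
    by_contra hfin
    rw [Set.not_infinite] at hfin
    apply hTm
    apply Set.Finite.subset (hfin.biUnion (fun p _ => Set.Finite.biUnion H.finite_toSet
      (fun h _ => (Set.finite_singleton (-(p : ℤ) - h)).insert ((p : ℤ) - h))))
    intro n hn
    obtain ⟨⟨hnS, hnC⟩, h₁, h1H, h₂, h2H, hne, hp1, hp2, hm⟩ := hn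
    have hCpos : 0 ≤ C := by
      rw [hC]; positivity
    have hnout : C < n ∨ n < -C := by
      simp only [Set.mem_Icc, not_and_or, not_le] at hnC
      rcases hnC with h | h
      · right; linarith
      · left; exact h
    have hsign : ∀ h ∈ H, (C < n → 0 < n + h) ∧ (n < -C → n + h < 0) := by
      intro h hh
      obtain ⟨hh0, hhC⟩ := hHmem h hh
      exact ⟨fun hx => by linarith, fun hx => by linarith⟩
    have key : ∃ p : ℕ, (p.Prime ∧ (p + m).Prime) ∧
        ∃ h ∈ H, n + h = (p : ℤ) ∨ n + h = -(p : ℤ) := by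
      rcases lt_or_gt_of_ne hne with hlt | hlt
      · have hAB : n + h₁ < n + h₂ := by linarith
        have hsg : 0 < n + h₁ ∨ n + h₂ < 0 := by
          rcases hnout with h | h
          · exact Or.inl ((hsign h₁ h1H).1 h)
          · exact Or.inr ((hsign h₂ h2H).2 h)
        obtain ⟨p, hpp, hppm, hor⟩ := pair_extract (n + h₁) (n + h₂) hp1 hp2 hAB hsg
        have hmm : (n + h₂ - (n + h₁)).natAbs = m := by
          rw [show n + h₂ - (n + h₁) = h₂ - h₁ by ring, hm]
        rw [hmm] at hppm
        rcases hor with h | h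
        · exact ⟨p, ⟨hpp, hppm⟩, h₁, h1H, Or.inl h⟩
        · exact ⟨p, ⟨hpp, hppm⟩, h₂, h2H, Or.inr h⟩
      · have hAB : n + h₂ < n + h₁ := by linarith
        have hsg : 0 < n + h₂ ∨ n + h₁ < 0 := by
          rcases hnout with h | h
          · exact Or.inl ((hsign h₂ h2H).1 h)
          · exact Or.inr ((hsign h₁ h1H).2 h)
        obtain ⟨p, hpp, hppm, hor⟩ := pair_extract (n + h₂) (n + h₁) hp2 hp1 hAB hsg
        have hmm : (n + h₁ - (n + h₂)).natAbs = m := by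
          rw [show n + h₁ - (n + h₂) = -(h₂ - h₁) by ring, Int.natAbs_neg, hm]
        rw [hmm] at hppm
        rcases hor with h | h
        · exact ⟨p, ⟨hpp, hppm⟩, h₂, h2H, Or.inl h⟩
        · exact ⟨p, ⟨hpp, hppm⟩, h₁, h1H, Or.inr h⟩
    obtain ⟨p, hpP, h, hhH, hor⟩ := key
    simp only [Set.mem_iUnion]
    refine ⟨p, hpP, h, hhH, ?_⟩
    simp only [Set.mem_insert_iff, Set.mem_singleton_iff]
    rcases hor with h' | h'
    · left; linarith
    · right; linarith
  have := hB0 hP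
  omega
end
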